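/- Let F be a group, R a normal subgroup of F, and c ≥ 1. Then [R ∩ γ_{c+1}(F), R ∩ γ_{c+1}(F)] ≤ ⟨T_{c+1}(F) ∩ R⟩. Consequently the quotient group (R ∩ γ_{c+1}(F))/⟨T_{c+1}(F) ∩ R⟩ (the c-nilpotent B̃₀-invariant of F/R) is abelian. -/

import Mathlib

open Subgroup
open scoped commutatorElement

/-- `Tset G c` is the set `T_{c+1}(G)` of left-normed commutators of weight `c+1` in `G`:
`Tset G 0 = G` (weight-one "commutators", i.e. all elements), and
`Tset G (n+1) = {⁅a, g⁆ | a ∈ Tset G n, g ∈ G}`. -/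
def Tset (G : Type*) [Group G] : ℕ → Set G
  | 0 => Set.univ
  | n + 1 => {x | ∃ a ∈ Tset G n, ∃ g : G, x = ⁅a, g⁆}

theorem Tset_conj {G : Type*} [Group G] (n : ℕ) {x : G} (hx : x ∈ Tset G n) (g : G) :
    g * x * g⁻¹ ∈ Tset G n := by
  induction n generalizing x with
  | zero => trivial
  | succ n ih =>
      obtain ⟨a, ha, b, rfl⟩ := hx
      exact ⟨g * a * g⁻¹, ih ha, g * b * g⁻¹, conjugate_commutatorElement a b g⟩

/-- `Tcl c S = ⟨T_{c+1}(G) ∩ S⟩`, the subgroup generated by the left-normed commutators of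
weight `c+1` lying in `S`. -/
def Tcl {G : Type*} [Group G] (c : ℕ) (S : Subgroup G) : Subgroup G :=
  Subgroup.closure (Tset G c ∩ (S : Set G))

instance Tcl_normal {G : Type*} [Group G] (c : ℕ) (S : Subgroup G) [hS : S.Normal] :
    (Tcl c S).Normal := by
  constructor
  intro n hn g
  induction hn using Subgroup.closure_induction with
  | mem x hx =>
      exact Subgroup.subset_closure ⟨Tset_conj c hx.1 g, hS.conj_mem x hx.2 g⟩
  | one => simpa using (Tcl c S).one_mem
  | mul x y _ _ hx hy =>
      have h : g * (x * y) * g⁻¹ = (g * x * g⁻¹) * (g * y * g⁻¹) := by group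
      rw [h]; exact mul_mem hx hy
  | inv x _ hx =>
      have h : g * x⁻¹ * g⁻¹ = (g * x * g⁻¹)⁻¹ := by group
      rw [h]; exact inv_mem hx

theorem Tset_subset_lcs {G : Type*} [Group G] (n : ℕ) :
    Tset G n ⊆ ((⊤ : Subgroup G).lowerCentralSeries n : Set G) := by
  induction n with
  | zero => intro x _; simp [Subgroup.lowerCentralSeries]
  | succ n ih =>
      rintro x ⟨a, ha, b, rfl⟩
      rw [Subgroup.lowerCentralSeries_succ]
      exact Subgroup.commutator_mem_commutator (ih ha) (Subgroup.mem_top b)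

theorem Tcl_le {G : Type*} [Group G] (c : ℕ) (S : Subgroup G) : Tcl c S ≤ S :=
  (Subgroup.closure_le S).2 Set.inter_subset_right

theorem Tcl_le_lcs {G : Type*} [Group G] (c : ℕ) (S : Subgroup G) :
    Tcl c S ≤ (⊤ : Subgroup G).lowerCentralSeries c :=
  (Subgroup.closure_le _).2 fun _ hx => Tset_subset_lcs c hx.1

theorem Tcl_mono {G : Type*} [Group G] (c : ℕ) {R K : Subgroup G} (h : R ≤ K) :
    Tcl c R ≤ Tcl c K :=
  Subgroup.closure_mono (Set.inter_subset_inter_right _ h)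

theorem subgroupOf_le_comap_inclusion {F : Type*} [Group F] {A B H₁ H₂ : Subgroup F}
    (hH : H₁ ≤ H₂) (hAB : A ≤ B) :
    A.subgroupOf H₁ ≤ (B.subgroupOf H₂).comap (Subgroup.inclusion hH) := by
  intro x hx
  rw [Subgroup.mem_comap, Subgroup.mem_subgroupOf, Subgroup.coe_inclusion]
  exact hAB (Subgroup.mem_subgroupOf.mp hx)

theorem Tset_inv {G : Type*} [Group G] (n : ℕ) {x : G} (hx : x ∈ Tset G n) :
    x⁻¹ ∈ Tset G n := by
  cases n with
  | zero => trivial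
  | succ n =>
    obtain ⟨a, ha, b, rfl⟩ := hx
    refine ⟨b * a * b⁻¹, Tset_conj n ha b, b⁻¹, ?_⟩
    simp only [commutatorElement_def]
    group

theorem lcs_le_Tcl_top {G : Type*} [Group G] (n : ℕ) :
    (⊤ : Subgroup G).lowerCentralSeries n ≤ Tcl n (⊤ : Subgroup G) := by
  induction n with
  | zero => intro x _; exact Subgroup.subset_closure ⟨trivial, trivial⟩
  | succ n ih =>
    have hcomm : (⊤ : Subgroup G).lowerCentralSeries (n + 1) =
        ⁅(⊤ : Subgroup G).lowerCentralSeries n, (⊤ : Subgroup G)⁆ := rfl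
    rw [hcomm, Subgroup.commutator_le]
    intro a ha g _
    have hN : (Tcl (n + 1) (⊤ : Subgroup G)).Normal := inferInstance
    have ha' : a ∈ Tcl n (⊤ : Subgroup G) := ih ha
    clear ha
    induction ha' using Subgroup.closure_induction with
    | mem x hx => exact Subgroup.subset_closure ⟨⟨x, hx.1, g, rfl⟩, trivial⟩
    | one => simpa using (Tcl (n + 1) (⊤ : Subgroup G)).one_mem
    | mul x y _ _ hx hy =>
        have h : ⁅x * y, g⁆ = x * ⁅y, g⁆ * x⁻¹ * ⁅x, g⁆ := by
          simp only [commutatorElement_def]; group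
        rw [h]
        exact mul_mem (hN.conj_mem _ hy x) hx
    | inv x _ hx =>
        have h : ⁅x⁻¹, g⁆ = x⁻¹ * ⁅x, g⁆⁻¹ * x := by
          simp only [commutatorElement_def]; group
        rw [h]
        have := hN.conj_mem _ (inv_mem hx) x⁻¹
        simpa using this

theorem commutator_mem_Tcl {F : Type*} [Group F] (R : Subgroup F) [hR : R.Normal] (c : ℕ)
    (hc : 1 ≤ c) {a r : F} (ha : a ∈ (⊤ : Subgroup F).lowerCentralSeries c) (hr : r ∈ R) :
    ⁅a, r⁆ ∈ Tcl c R := by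
  obtain ⟨m, rfl⟩ : ∃ m, c = m + 1 := ⟨c - 1, (Nat.succ_pred_eq_of_pos hc).symm⟩
  have hN : (Tcl (m + 1) R).Normal := inferInstance
  have ha' : a ∈ Tcl (m + 1) (⊤ : Subgroup F) := lcs_le_Tcl_top _ ha
  clear ha
  induction ha' using Subgroup.closure_induction with
  | mem t ht =>
      obtain ⟨s, hs, g, rfl⟩ := ht.1
      set u : F := ⁅r * s * r⁻¹, g⁻¹ * r * g * r⁻¹⁆ with hu_def
      set v : F := ⁅s⁻¹, r⁆ with hv_def
      have hr'' : g⁻¹ * r * g * r⁻¹ ∈ R := by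
        have h1 : g⁻¹ * r * g⁻¹⁻¹ ∈ R := hR.conj_mem r hr g⁻¹
        have h2 : g⁻¹ * r * g * r⁻¹ = (g⁻¹ * r * g⁻¹⁻¹) * r⁻¹ := by group
        rw [h2]; exact mul_mem h1 (inv_mem hr)
      have huR : u ∈ R := by
        rw [hu_def, commutatorElement_def]
        exact mul_mem (hR.conj_mem _ hr'' _) (inv_mem hr'')
      have hu : u ∈ Tcl (m + 1) R :=
        Subgroup.subset_closure ⟨⟨r * s * r⁻¹, Tset_conj m hs r, _, rfl⟩, huR⟩
      have hvR : v ∈ R := by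
        rw [hv_def, commutatorElement_def]
        exact mul_mem (hR.conj_mem _ hr _) (inv_mem hr)
      have hv : v ∈ Tcl (m + 1) R :=
        Subgroup.subset_closure ⟨⟨s⁻¹, Tset_inv m hs, r, rfl⟩, hvR⟩
      have hgv : ⁅g, v⁆ ∈ Tcl (m + 1) R := by
        have h1 : ⁅g, v⁆ = (g * v * g⁻¹) * v⁻¹ := by
          simp only [commutatorElement_def]
        rw [h1]; exact mul_mem (hN.conj_mem v hv g) (inv_mem hv)
      have key : ⁅⁅s, g⁆, r⁆ =
          (⁅s, g⁆ * (g * u * g⁻¹)⁻¹ * ⁅s, g⁆⁻¹) * (s * ⁅g, v⁆ * s⁻¹) := by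
        rw [hu_def, hv_def]
        simp only [commutatorElement_def]
        group
      rw [key]
      exact mul_mem (hN.conj_mem _ (inv_mem (hN.conj_mem u hu g)) _) (hN.conj_mem _ hgv s)
  | one => simpa using (Tcl (m + 1) R).one_mem
  | mul x y _ _ hx hy =>
      have h : ⁅x * y, r⁆ = x * ⁅y, r⁆ * x⁻¹ * ⁅x, r⁆ := by
        simp only [commutatorElement_def]; group
      rw [h]
      exact mul_mem (hN.conj_mem _ hy x) hx
  | inv x _ hx =>
      have h : ⁅x⁻¹, r⁆ = x⁻¹ * ⁅x, r⁆⁻¹ * x := by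
        simp only [commutatorElement_def]; group
      rw [h]
      have := hN.conj_mem _ (inv_mem hx) x⁻¹
      simpa using this


/-- for a group `F`, a normal subgroup `R` and `c ≥ 1`,
`[R ∩ γ_{c+1}(F), R ∩ γ_{c+1}(F)] ≤ ⟨T_{c+1}(F) ∩ R⟩`, and consequently the quotient
`(R ∩ γ_{c+1}(F))/⟨T_{c+1}(F) ∩ R⟩` (the `c`-nilpotent `B̃₀`-invariant of `F/R`) is abelian.
Here `γ_{c+1}(F) = lowerCentralSeries F c` and `⟨T_{c+1}(F) ∩ R⟩ = Tcl c R`. -/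
theorem stmt2 {F : Type*} [Group F] (R : Subgroup F) [R.Normal] (c : ℕ) (hc : 1 ≤ c) :
    ⁅R ⊓ (⊤ : Subgroup F).lowerCentralSeries c, R ⊓ (⊤ : Subgroup F).lowerCentralSeries c⁆ ≤ Tcl c R ∧
      ∀ x y : (↥(R ⊓ (⊤ : Subgroup F).lowerCentralSeries c)) ⧸
          ((Tcl c R).subgroupOf (R ⊓ (⊤ : Subgroup F).lowerCentralSeries c)),
        x * y = y * x := by
  have h1 : ⁅R ⊓ (⊤ : Subgroup F).lowerCentralSeries c, R ⊓ (⊤ : Subgroup F).lowerCentralSeries c⁆ ≤ Tcl c R := by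
    rw [Subgroup.commutator_le]
    intro a ha b hb
    exact commutator_mem_Tcl R c hc ha.2 hb.1
  refine ⟨h1, ?_⟩
  intro x y
  refine QuotientGroup.induction_on x fun a => QuotientGroup.induction_on y fun b => ?_
  rw [← QuotientGroup.mk_mul, ← QuotientGroup.mk_mul, QuotientGroup.eq,
    Subgroup.mem_subgroupOf]
  have hcoe : (((a * b)⁻¹ * (b * a) : ↥(R ⊓ (⊤ : Subgroup F).lowerCentralSeries c)) : F) =
      ⁅(b : F)⁻¹, (a : F)⁻¹⁆ := by
    simp only [commutatorElement_def, Subgroup.coe_mul, Subgroup.coe_inv]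
    group
  rw [hcoe]
  exact h1 (Subgroup.commutator_mem_commutator (inv_mem b.2) (inv_mem a.2))
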